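/- Fix ε ∈ (0, 1/10) and an integer ℓ ≥ 1, and set N = ⌊1/(6ε^ℓ)⌋. Then for every integer d with 16ℓ·log(1/ε)/ε ≤ d ≤ (1/20)·exp(1/(48·ε^{ℓ−1})), there exists a binary matrix B ∈ {0,1}^{N×d} such that: (1) every row sum of B is at least εd/2; (2) every column sum of B lies in the interval [εN/2, 2εN]; and (3) B is (k, ℓ)-block-free with k = ⌈ℓ·log d⌉ (natural logarithm). -/

import Mathlib

namespace BFAux

open Finset

variable {α : Type*} [Fintype α] [DecidableEq α]

lemma sum_prod_bool (f : α → Bool → ℝ) :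
    ∑ g : α → Bool, ∏ a, f a (g a) = ∏ a, (f a true + f a false) := by
  rw [show (∑ g : α → Bool, ∏ a, f a (g a)) = ∏ a, ∑ b : Bool, f a b from
    (Fintype.prod_sum _).symm]
  exact Finset.prod_congr rfl fun a _ => by rw [Fintype.sum_bool]

lemma sum_w_eq_one (p : ℝ) :
    ∑ g : α → Bool, (∏ a, if g a then p else 1 - p) = 1 := by
  rw [sum_prod_bool (fun _ b => if b then p else 1 - p)]
  simp

lemma w_nonneg (p : ℝ) (h0 : 0 ≤ p) (h1 : p ≤ 1) (g : α → Bool) :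
    0 ≤ ∏ a, if g a then p else 1 - p :=
  Finset.prod_nonneg fun a _ => by split <;> linarith

lemma prob_allOnes (p : ℝ) (S : Finset α) :
    ∑ g ∈ Finset.univ.filter (fun g : α → Bool => ∀ a ∈ S, g a = true),
      (∏ a, if g a then p else 1 - p) = p ^ S.card := by
  classical
  rw [Finset.sum_filter]
  have key : ∀ g : α → Bool,
      (if (∀ a ∈ S, g a = true) then (∏ a, if g a then p else 1 - p) else 0)
        = ∏ a, (fun a (b : Bool) =>
            if a ∈ S then (if b then p else 0) else (if b then p else 1 - p)) a (g a) := by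
    intro g
    by_cases h : ∀ a ∈ S, g a = true
    · rw [if_pos h]
      refine Finset.prod_congr rfl fun a _ => ?_
      by_cases ha : a ∈ S
      · simp [ha, h a ha]
      · simp [ha]
    · rw [if_neg h]
      push_neg at h
      obtain ⟨a, haS, hga⟩ := h
      have hga' : g a = false := by revert hga; cases g a <;> simp
      exact (Finset.prod_eq_zero (Finset.mem_univ a) (by simp [haS, hga'])).symm
  simp_rw [key]
  refine (sum_prod_bool (fun a (b : Bool) => if a ∈ S then (if b then p else 0) else (if b then p else 1 - p))).trans ?_
  have h3 : ∀ a ∈ (Finset.univ : Finset α), ((fun a (b : Bool) =>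
            if a ∈ S then (if b then p else 0) else (if b then p else 1 - p)) a true
      + (fun a (b : Bool) =>
            if a ∈ S then (if b then p else 0) else (if b then p else 1 - p)) a false)
      = (if a ∈ S then p else 1) := by
    intro a _; by_cases ha : a ∈ S <;> simp [ha]
  exact (Finset.prod_congr rfl h3).trans
    (by rw [Fintype.prod_ite_mem S (fun _ => p), Finset.prod_const])

lemma chernoff (p : ℝ) (h0 : 0 ≤ p) (h1 : p ≤ 1) (S : Finset α) (t a : ℝ)
    (P : ℕ → Prop) [DecidablePred P] (hP : ∀ m : ℕ, P m → t * a ≤ t * m) :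
    ∑ g ∈ Finset.univ.filter
        (fun g : α → Bool => P ((S.filter fun x => g x = true)).card),
      (∏ x, if g x then p else 1 - p)
      ≤ Real.exp ((S.card : ℝ) * (p * (Real.exp t - 1)) - t * a) := by
  classical
  have hw0 : ∀ g : α → Bool, 0 ≤ ∏ x, if g x then p else 1 - p :=
    fun g => w_nonneg p h0 h1 g
  have step1 : ∑ g ∈ Finset.univ.filter
        (fun g : α → Bool => P ((S.filter fun x => g x = true)).card),
      (∏ x, if g x then p else 1 - p)
      ≤ ∑ g : α → Bool,
          Real.exp (t * ((S.filter fun x => g x = true)).card - t * a)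
            * ∏ x, if g x then p else 1 - p := by
    have hle : ∀ g ∈ Finset.univ.filter
        (fun g : α → Bool => P ((S.filter fun x => g x = true)).card),
        (∏ x, if g x then p else 1 - p)
        ≤ Real.exp (t * ((S.filter fun x => g x = true)).card - t * a)
            * ∏ x, if g x then p else 1 - p := by
      intro g hg
      have hg' := (Finset.mem_filter.mp hg).2
      have h1e : (1:ℝ) ≤ Real.exp (t * ((S.filter fun x => g x = true)).card - t * a) :=
        Real.one_le_exp (by linarith [hP _ hg'])
      exact le_mul_of_one_le_left (hw0 g) h1e
    exact le_trans (Finset.sum_le_sum hle)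
      (Finset.sum_le_sum_of_subset_of_nonneg (Finset.subset_univ _)
        (fun g _ _ => mul_nonneg (Real.exp_nonneg _) (hw0 g)))
  have hterm : ∀ g : α → Bool,
      Real.exp (t * ((S.filter fun x => g x = true)).card - t * a)
          * (∏ x, if g x then p else 1 - p)
      = Real.exp (-(t * a)) * ∏ x, (fun x (b : Bool) =>
          (if b then p else 1 - p) * (if x ∈ S ∧ b = true then Real.exp t else 1)) x (g x) := by
    intro g
    have hprod : (∏ x, (if x ∈ S ∧ g x = true then Real.exp t else 1))
        = Real.exp (t * ((S.filter fun x => g x = true)).card) := by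
      rw [Finset.prod_ite, Finset.prod_const, Finset.prod_const, one_pow, mul_one]
      have hfe : Finset.univ.filter (fun x => x ∈ S ∧ g x = true)
          = S.filter (fun x => g x = true) := by
        ext x; simp
      rw [hfe, mul_comm t, Real.exp_nat_mul]
    rw [Finset.prod_mul_distrib, hprod, Real.exp_sub, Real.exp_neg]
    field_simp
  simp_rw [hterm] at step1
  rw [← Finset.mul_sum,
    sum_prod_bool (fun x (b : Bool) =>
      (if b then p else 1 - p) * (if x ∈ S ∧ b = true then Real.exp t else 1))] at step1
  have h4 : ∀ x ∈ (Finset.univ : Finset α),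
      ((fun x (b : Bool) =>
          (if b then p else 1 - p) * (if x ∈ S ∧ b = true then Real.exp t else 1)) x true
      + (fun x (b : Bool) =>
          (if b then p else 1 - p) * (if x ∈ S ∧ b = true then Real.exp t else 1)) x false)
      = (if x ∈ S then 1 - p + p * Real.exp t else 1) := by
    intro x _; by_cases hx : x ∈ S <;> simp [hx] <;> ring
  rw [Finset.prod_congr rfl h4, Fintype.prod_ite_mem S (fun _ => 1 - p + p * Real.exp t),
    Finset.prod_const] at step1
  refine step1.trans ?_
  have hbase0 : (0:ℝ) ≤ 1 - p + p * Real.exp t := by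
    have := Real.exp_pos t
    nlinarith
  have hbase : (1 - p + p * Real.exp t) ≤ Real.exp (p * (Real.exp t - 1)) := by
    have := Real.add_one_le_exp (p * (Real.exp t - 1))
    linarith
  calc Real.exp (-(t * a)) * (1 - p + p * Real.exp t) ^ S.card
      ≤ Real.exp (-(t * a)) * Real.exp (p * (Real.exp t - 1)) ^ S.card := by
        have := pow_le_pow_left₀ hbase0 hbase S.card
        have h5 : (0:ℝ) ≤ Real.exp (-(t*a)) := Real.exp_nonneg _
        nlinarith
    _ = Real.exp ((S.card : ℝ) * (p * (Real.exp t - 1)) - t * a) := by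
        rw [← Real.exp_nat_mul, ← Real.exp_add]
        ring_nf

lemma chernoff_low (p : ℝ) (h0 : 0 ≤ p) (h1 : p ≤ 1) (S : Finset α) :
    ∑ g ∈ Finset.univ.filter
        (fun g : α → Bool =>
          (((S.filter fun x => g x = true)).card : ℝ) < p * S.card / 2),
      (∏ x, if g x then p else 1 - p)
      ≤ Real.exp (-((S.card : ℝ) * p) / 8) := by
  have hlog2 : (0:ℝ) ≤ Real.log 2 := Real.log_nonneg (by norm_num)
  have h := chernoff p h0 h1 S (-Real.log 2) (p * S.card / 2)
    (fun m => (m:ℝ) < p * S.card / 2)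
    (fun m hm => by nlinarith)
  refine h.trans (Real.exp_le_exp.mpr ?_)
  have he : Real.exp (-Real.log 2) = 1/2 := by
    rw [Real.exp_neg, Real.exp_log (by norm_num : (0:ℝ) < 2)]; norm_num
  rw [he]
  have hn : (0:ℝ) ≤ (S.card : ℝ) := Nat.cast_nonneg _
  nlinarith [Real.log_two_lt_d9, mul_nonneg hn h0]

lemma chernoff_high (p : ℝ) (h0 : 0 ≤ p) (h1 : p ≤ 1) (S : Finset α) :
    ∑ g ∈ Finset.univ.filter
        (fun g : α → Bool =>
          2 * (p * S.card) < (((S.filter fun x => g x = true)).card : ℝ)),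
      (∏ x, if g x then p else 1 - p)
      ≤ Real.exp (-((S.card : ℝ) * p) / 8) := by
  have hlog2 : (0:ℝ) ≤ Real.log 2 := Real.log_nonneg (by norm_num)
  have h := chernoff p h0 h1 S (Real.log 2) (2 * (p * S.card))
    (fun m => 2 * (p * S.card) < (m:ℝ))
    (fun m hm => by nlinarith)
  refine h.trans (Real.exp_le_exp.mpr ?_)
  rw [Real.exp_log (by norm_num : (0:ℝ) < 2)]
  have hn : (0:ℝ) ≤ (S.card : ℝ) := Nat.cast_nonneg _
  nlinarith [Real.log_two_gt_d9, mul_nonneg hn h0]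

lemma sum_union_le {β : Type*} [DecidableEq β] (s t : Finset β) (w : β → ℝ)
    (hw : ∀ x, 0 ≤ w x) :
    ∑ x ∈ s ∪ t, w x ≤ ∑ x ∈ s, w x + ∑ x ∈ t, w x := by
  have h := Finset.sum_union_inter (s₁ := s) (s₂ := t) (f := w)
  have h2 : 0 ≤ ∑ x ∈ s ∩ t, w x := Finset.sum_nonneg fun x _ => hw x
  linarith

lemma sum_filter_bex_le_aux {β ι : Type*} [DecidableEq β] (u : Finset β) (s : Finset ι)
    (Q : ι → β → Prop) [∀ i, DecidablePred (Q i)] (w : β → ℝ) (hw : ∀ x, 0 ≤ w x) :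
    ∑ x ∈ u.filter (fun x => ∃ i ∈ s, Q i x), w x
      ≤ ∑ i ∈ s, ∑ x ∈ u.filter (Q i), w x := by
  classical
  induction s using Finset.induction with
  | empty => simp
  | @insert a s ha ih =>
    have hsplit : u.filter (fun x => ∃ i ∈ insert a s, Q i x)
        = u.filter (Q a) ∪ u.filter (fun x => ∃ i ∈ s, Q i x) := by
      ext x
      simp only [Finset.mem_filter, Finset.mem_union, Finset.mem_insert]
      constructor
      · rintro ⟨hx, i, (rfl | hi), hQ⟩
        · exact Or.inl ⟨hx, hQ⟩
        · exact Or.inr ⟨hx, i, hi, hQ⟩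
      · rintro (⟨hx, hQ⟩ | ⟨hx, i, hi, hQ⟩)
        · exact ⟨hx, a, Or.inl rfl, hQ⟩
        · exact ⟨hx, i, Or.inr hi, hQ⟩
    rw [hsplit, Finset.sum_insert ha]
    calc ∑ x ∈ u.filter (Q a) ∪ u.filter (fun x => ∃ i ∈ s, Q i x), w x
        ≤ ∑ x ∈ u.filter (Q a), w x + ∑ x ∈ u.filter (fun x => ∃ i ∈ s, Q i x), w x :=
          sum_union_le _ _ w hw
      _ ≤ _ := by have := ih; linarith

lemma sum_filter_bex_le {β ι : Type*} [DecidableEq β] (u : Finset β) (s : Finset ι)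
    (Q : ι → β → Prop) [∀ i, DecidablePred (Q i)] {_ : DecidablePred fun x => ∃ i ∈ s, Q i x}
    (w : β → ℝ) (hw : ∀ x, 0 ≤ w x) :
    ∑ x ∈ u.filter (fun x => ∃ i ∈ s, Q i x), w x
      ≤ ∑ i ∈ s, ∑ x ∈ u.filter (Q i), w x := by
  convert sum_filter_bex_le_aux u s Q w hw using 3

end BFAux

/-- A binary matrix `B ∈ {0,1}^{N×d}` is `(k, ℓ)`-block-free if for every `I ⊆ [N]` with
`|I| = k` and every `J ⊆ [d]` with `|J| = ℓ` there is some `(i, j) ∈ I × J` with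
`B i j = 0`; equivalently, `B` contains no `k × ℓ` all-ones submatrix. -/
def BlockFree (N d : ℕ) (B : Fin N → Fin d → Bool) (k ℓ : ℕ) : Prop :=
  ∀ I : Finset (Fin N), I.card = k → ∀ J : Finset (Fin d), J.card = ℓ →
    ∃ i ∈ I, ∃ j ∈ J, B i j = false

set_option maxHeartbeats 1000000 in
/-- Fix `ε ∈ (0, 1/10)`, an integer `ℓ ≥ 1`, and set `N = ⌊1/(6ε^ℓ)⌋`.
For every integer `d` with `16·ℓ·log(1/ε)/ε ≤ d ≤ (1/20)·exp(1/(48·ε^{ℓ−1}))`, there is a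
binary matrix `B ∈ {0,1}^{N×d}` such that (1) every row sum is at least `εd/2`;
(2) every column sum lies in `[εN/2, 2εN]`; and (3) `B` is `(k, ℓ)`-block-free with
`k = ⌈ℓ·log d⌉` (natural logarithm). -/
theorem exists_blockFree_matrix (ε : ℝ) (hε0 : 0 < ε) (hε1 : ε < 1 / 10)
    (ℓ : ℕ) (hℓ : 1 ≤ ℓ) (N : ℕ) (hN : N = ⌊1 / (6 * ε ^ ℓ)⌋₊)
    (d : ℕ) (hd1 : 16 * ℓ * Real.log (1 / ε) / ε ≤ (d : ℝ))
    (hd2 : (d : ℝ) ≤ (1 / 20) * Real.exp (1 / (48 * ε ^ (ℓ - 1)))) :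
    ∃ B : Fin N → Fin d → Bool,
      (∀ i : Fin N,
        ε * d / 2 ≤ ((Finset.univ.filter fun j : Fin d => B i j = true).card : ℝ)) ∧
      (∀ j : Fin d,
        ε * N / 2 ≤ ((Finset.univ.filter fun i : Fin N => B i j = true).card : ℝ) ∧
        ((Finset.univ.filter fun i : Fin N => B i j = true).card : ℝ) ≤ 2 * ε * N) ∧
      BlockFree N d B ⌈(ℓ : ℝ) * Real.log d⌉₊ ℓ := by
  classical
  open Finset in
  set k : ℕ := ⌈(ℓ : ℝ) * Real.log d⌉₊ with hkdef
  -- ## numeric preliminaries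
  have hεle1 : ε ≤ 1 := by linarith
  have hεpowpos : 0 < ε ^ ℓ := pow_pos hε0 ℓ
  have hεppos : 0 < ε ^ (ℓ - 1) := pow_pos hε0 _
  have h10 : (10:ℝ) < 1 / ε := by rw [lt_div_iff₀ hε0]; linarith
  have hεpow_le : ε ^ ℓ ≤ ε := by
    calc ε ^ ℓ ≤ ε ^ 1 := pow_le_pow_of_le_one hε0.le hεle1 hℓ
    _ = ε := pow_one ε
  have hNle : (N : ℝ) ≤ 1 / (6 * ε ^ ℓ) := by
    rw [hN]; exact Nat.floor_le (by positivity)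
  have hNgt : 1 / (6 * ε ^ ℓ) - 1 < (N : ℝ) := by
    have h := Nat.lt_floor_add_one (1 / (6 * ε ^ ℓ))
    rw [hN]; linarith
  have hNε : (N : ℝ) * ε ^ ℓ ≤ 1 / 6 := by
    have e1 : (1 / (6 * ε ^ ℓ)) * ε ^ ℓ = 1 / 6 := by field_simp
    nlinarith [mul_le_mul_of_nonneg_right hNle hεpowpos.le]
  have hεsplit : ε ^ ℓ = ε * ε ^ (ℓ - 1) := by
    conv_lhs => rw [show ℓ = 1 + (ℓ - 1) from by omega]
    rw [pow_add, pow_one]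
  have hεNge : 1 / (6 * ε ^ (ℓ - 1)) - ε ≤ ε * N := by
    have e2 : ε * (1 / (6 * ε ^ ℓ)) = 1 / (6 * ε ^ (ℓ - 1)) := by
      rw [hεsplit]; field_simp
    nlinarith [mul_lt_mul_of_pos_left hNgt hε0]
  have hexp1 : Real.exp 1 < 2.7182818286 := Real.exp_one_lt_d9
  have hlog1ε : (2:ℝ) ≤ Real.log (1 / ε) := by
    have h2 : Real.exp 2 ≤ 1 / ε := by
      have he2 : Real.exp 2 = Real.exp 1 * Real.exp 1 := by
        rw [← Real.exp_add]; norm_num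
      nlinarith [Real.exp_pos 1]
    calc (2:ℝ) = Real.log (Real.exp 2) := (Real.log_exp 2).symm
    _ ≤ Real.log (1 / ε) := Real.log_le_log (Real.exp_pos 2) h2
  have hℓ1 : (1:ℝ) ≤ (ℓ:ℝ) := by exact_mod_cast hℓ
  have hd320 : (320:ℝ) ≤ (d:ℝ) := by
    refine le_trans ?_ hd1
    rw [div_eq_mul_one_div]
    have hab : (2:ℝ) ≤ (ℓ:ℝ) * Real.log (1/ε) := by nlinarith
    nlinarith
  have hd1' : 16 * (ℓ:ℝ) * Real.log (1/ε) ≤ ε * (d:ℝ) := by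
    have h := (div_le_iff₀ hε0).mp hd1
    linarith
  have hd0 : (0:ℝ) < d := by linarith
  have hd1R : (1:ℝ) ≤ (d:ℝ) := by linarith
  have hlogd0 : (0:ℝ) ≤ Real.log d := Real.log_nonneg hd1R
  have hkge : (ℓ:ℝ) * Real.log d ≤ (k:ℝ) := Nat.le_ceil _
  -- ## the three numeric bounds
  have rowBound : (N:ℝ) * Real.exp (-((d:ℝ) * ε) / 8) ≤ 1/60 := by
    have hL : Real.log (1/ε) = - Real.log ε := by rw [one_div, Real.log_inv]
    rw [hL] at hd1'
    have e3 : Real.exp (-((d:ℝ)*ε)/8) ≤ Real.exp (((2*ℓ:ℕ):ℝ) * Real.log ε) := by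
      apply Real.exp_le_exp.mpr
      push_cast
      linarith
    have e4 : Real.exp (((2*ℓ:ℕ):ℝ) * Real.log ε) = ε ^ (2*ℓ) := by
      rw [Real.exp_nat_mul, Real.exp_log hε0]
    have e5 : ε ^ (2*ℓ) = ε ^ ℓ * ε ^ ℓ := by rw [two_mul, pow_add]
    have hN0 : (0:ℝ) ≤ (N:ℝ) := Nat.cast_nonneg N
    have hεℓ10 : ε ^ ℓ ≤ 1/10 := by linarith
    calc (N:ℝ) * Real.exp (-((d:ℝ)*ε)/8) ≤ (N:ℝ) * (ε^ℓ * ε^ℓ) := by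
          rw [← e5, ← e4]; exact mul_le_mul_of_nonneg_left e3 hN0
    _ ≤ 1/60 := by
          have hmm := mul_le_mul hNε hεℓ10 hεpowpos.le (by norm_num : (0:ℝ) ≤ 1/6)
          rw [← mul_assoc]; linarith
  have colBound : (d:ℝ) * (Real.exp (-((N:ℝ)*ε)/8) + Real.exp (-((N:ℝ)*ε)/8)) ≤ 3/10 := by
    have e6 : Real.exp (-((N:ℝ)*ε)/8)
        ≤ Real.exp (-(1 / (48 * ε ^ (ℓ - 1))) + ε/8) := by
      apply Real.exp_le_exp.mpr
      have e7 : (1 / (6 * ε ^ (ℓ-1))) / 8 = 1 / (48 * ε ^ (ℓ - 1)) := by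
        field_simp; ring
      linarith
    have hd0' : (0:ℝ) ≤ (d:ℝ) := by linarith
    have hmul : (d:ℝ) * Real.exp (-((N:ℝ)*ε)/8)
        ≤ (1/20) * Real.exp (1 / (48 * ε ^ (ℓ - 1)))
            * Real.exp (-(1 / (48 * ε ^ (ℓ - 1))) + ε/8) :=
      mul_le_mul hd2 e6 (Real.exp_nonneg _) (by positivity)
    have hcollapse : (1/20) * Real.exp (1 / (48 * ε ^ (ℓ - 1)))
            * Real.exp (-(1 / (48 * ε ^ (ℓ - 1))) + ε/8) = (1/20) * Real.exp (ε/8) := by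
      rw [mul_assoc, ← Real.exp_add]; ring_nf
    have hexpε : Real.exp (ε/8) ≤ Real.exp 1 := Real.exp_le_exp.mpr (by linarith)
    nlinarith [Real.exp_nonneg (-((N:ℝ)*ε)/8)]
  have blockBound :
      ((N.choose k : ℕ):ℝ) * ((d.choose ℓ : ℕ):ℝ) * ε ^ (k * ℓ) ≤ 1/17 := by
    have c1 : ((N.choose k : ℕ):ℝ) ≤ (N:ℝ)^k := by
      exact_mod_cast Nat.cast_le.mpr (Nat.choose_le_pow N k)
    have c2 : ((d.choose ℓ : ℕ):ℝ) ≤ (d:ℝ)^ℓ := by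
      exact_mod_cast Nat.cast_le.mpr (Nat.choose_le_pow d ℓ)
    have cε : (0:ℝ) ≤ ε ^ (k * ℓ) := by positivity
    have step1 : ((N.choose k : ℕ):ℝ) * ((d.choose ℓ : ℕ):ℝ) * ε ^ (k * ℓ)
        ≤ ((N:ℝ) * ε ^ ℓ)^k * (d:ℝ)^ℓ := by
      have e9 : ((N:ℝ) * ε ^ ℓ)^k * (d:ℝ)^ℓ = (N:ℝ)^k * (d:ℝ)^ℓ * ε ^ (k * ℓ) := by
        rw [mul_pow, mul_comm k ℓ, pow_mul]; ring
      rw [e9]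
      have hN0 : (0:ℝ) ≤ ((N.choose k : ℕ):ℝ) := Nat.cast_nonneg _
      have hd0'' : (0:ℝ) ≤ ((d.choose ℓ : ℕ):ℝ) := Nat.cast_nonneg _
      have := mul_le_mul c1 c2 hd0'' (by positivity)
      nlinarith
    have step2 : ((N:ℝ) * ε ^ ℓ)^k * (d:ℝ)^ℓ ≤ (1/6:ℝ)^k * (d:ℝ)^ℓ := by
      have := pow_le_pow_left₀ (by positivity) hNε k
      have hdp : (0:ℝ) ≤ (d:ℝ)^ℓ := by positivity
      nlinarith
    have e10 : ((1:ℝ)/6)^k * (d:ℝ)^ℓ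
        = Real.exp ((ℓ:ℝ) * Real.log d - (k:ℝ) * Real.log 6) := by
      have hdd : Real.exp ((ℓ:ℝ) * Real.log d) = (d:ℝ)^ℓ := by
        rw [Real.exp_nat_mul, Real.exp_log hd0]
      have h6 : Real.exp (-((k:ℝ) * Real.log 6)) = ((1:ℝ)/6)^k := by
        rw [show -((k:ℝ) * Real.log 6) = (k:ℝ) * Real.log (1/6) from by
              rw [one_div, Real.log_inv]; ring,
            Real.exp_nat_mul, Real.exp_log (by norm_num : (0:ℝ) < 1/6)]
      rw [← hdd, ← h6, ← Real.exp_add]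
      congr 1
      ring
    have hlog6 : (3/2:ℝ) ≤ Real.log 6 := by
      have h3 : Real.exp 3 ≤ 36 := by
        have he3 : Real.exp 3 = Real.exp 1 * Real.exp 1 * Real.exp 1 := by
          rw [← Real.exp_add, ← Real.exp_add]; norm_num
        nlinarith [Real.exp_pos 1]
      have h36 : Real.exp (3/2) ≤ 6 := by
        have hsq : Real.exp (3/2) * Real.exp (3/2) = Real.exp 3 := by
          rw [← Real.exp_add]; norm_num
        nlinarith [Real.exp_pos (3/2)]
      calc (3/2:ℝ) = Real.log (Real.exp (3/2)) := (Real.log_exp _).symm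
      _ ≤ Real.log 6 := Real.log_le_log (Real.exp_pos _) h36
    have hlogd17 : 2 * Real.log 17 ≤ Real.log d := by
      calc 2 * Real.log 17 = Real.log ((17:ℝ)^(2:ℕ)) := by
            rw [Real.log_pow]; push_cast; ring
      _ ≤ Real.log d := Real.log_le_log (by positivity) (by push_cast; linarith)
    have e11 : (ℓ:ℝ) * Real.log d - (k:ℝ) * Real.log 6 ≤ - Real.log 17 := by
      have hm : ((ℓ:ℝ) * Real.log d) * (3/2) ≤ (k:ℝ) * Real.log 6 := by
        have hk0 : 0 ≤ (ℓ:ℝ) * Real.log d := mul_nonneg (by linarith) hlogd0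
        nlinarith
      nlinarith [mul_nonneg (sub_nonneg.mpr hℓ1) hlogd0]
    have e12 : Real.exp ((ℓ:ℝ) * Real.log d - (k:ℝ) * Real.log 6)
        ≤ 1/17 := by
      calc Real.exp ((ℓ:ℝ) * Real.log d - (k:ℝ) * Real.log 6)
          ≤ Real.exp (- Real.log 17) := Real.exp_le_exp.mpr e11
      _ = 1/17 := by
            rw [Real.exp_neg, Real.exp_log (by norm_num : (0:ℝ) < 17)]; norm_num
    calc ((N.choose k : ℕ):ℝ) * ((d.choose ℓ : ℕ):ℝ) * ε ^ (k * ℓ)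
        ≤ (1/6:ℝ)^k * (d:ℝ)^ℓ := le_trans step1 step2
    _ = Real.exp ((ℓ:ℝ) * Real.log d - (k:ℝ) * Real.log 6) := e10
    _ ≤ 1/17 := e12
  -- ## probabilistic existence
  have hw0 : ∀ g : Fin N × Fin d → Bool, 0 ≤ ∏ x, if g x then ε else 1 - ε :=
    fun g => BFAux.w_nonneg ε hε0.le hεle1 g
  have embr : ∀ i : Fin N, Function.Injective (fun j : Fin d => ((i, j) : Fin N × Fin d)) :=
    fun i a b h => by simpa using h
  have embc : ∀ j : Fin d, Function.Injective (fun i : Fin N => ((i, j) : Fin N × Fin d)) :=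
    fun j a b h => by simpa using h
  set Sr : Fin N → Finset (Fin N × Fin d) :=
    fun i => Finset.univ.map ⟨fun j : Fin d => (i, j), embr i⟩ with hSrdef
  set Sc : Fin d → Finset (Fin N × Fin d) :=
    fun j => Finset.univ.map ⟨fun i : Fin N => (i, j), embc j⟩ with hScdef
  have hSr_card : ∀ i, (Sr i).card = d := by
    intro i; simp [hSrdef]
  have hSc_card : ∀ j, (Sc j).card = N := by
    intro j; simp [hScdef]
  have hSr_filter : ∀ (i : Fin N) (g : Fin N × Fin d → Bool),
      (((Sr i).filter fun x => g x = true)).card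
        = ((Finset.univ : Finset (Fin d)).filter fun j => g (i, j) = true).card := by
    intro i g
    simp only [hSrdef, Finset.filter_map, Finset.card_map]
    rfl
  have hSc_filter : ∀ (j : Fin d) (g : Fin N × Fin d → Bool),
      (((Sc j).filter fun x => g x = true)).card
        = ((Finset.univ : Finset (Fin N)).filter fun i => g (i, j) = true).card := by
    intro j g
    simp only [hScdef, Finset.filter_map, Finset.card_map]
    rfl
  have main : ∃ g : Fin N × Fin d → Bool,
      ¬ ((∃ i ∈ (Finset.univ : Finset (Fin N)),
            ((((Sr i).filter fun x => g x = true)).card : ℝ) < ε * (d:ℝ) / 2)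
        ∨ ((∃ j ∈ (Finset.univ : Finset (Fin d)),
            (((((Sc j).filter fun x => g x = true)).card : ℝ) < ε * (N:ℝ) / 2
            ∨ 2 * (ε * (N:ℝ)) < ((((Sc j).filter fun x => g x = true)).card : ℝ)))
        ∨ (∃ I ∈ Finset.powersetCard k (Finset.univ : Finset (Fin N)),
           ∃ J ∈ Finset.powersetCard ℓ (Finset.univ : Finset (Fin d)),
            ∀ x ∈ I ×ˢ J, g x = true))) := by
    by_contra hcon
    push_neg at hcon
    have hbad : (Finset.univ : Finset (Fin N × Fin d → Bool)).filter
        (fun g => (fun g : Fin N × Fin d → Bool => ∃ i ∈ (Finset.univ : Finset (Fin N)),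
            ((((Sr i).filter fun x => g x = true)).card : ℝ) < ε * (d:ℝ) / 2) g
          ∨ ((fun g : Fin N × Fin d → Bool => ∃ j ∈ (Finset.univ : Finset (Fin d)),
            (((((Sc j).filter fun x => g x = true)).card : ℝ) < ε * (N:ℝ) / 2
            ∨ 2 * (ε * (N:ℝ)) < ((((Sc j).filter fun x => g x = true)).card : ℝ))) g ∨ (fun g : Fin N × Fin d → Bool => ∃ I ∈ Finset.powersetCard k (Finset.univ : Finset (Fin N)),
           ∃ J ∈ Finset.powersetCard ℓ (Finset.univ : Finset (Fin d)),
            ∀ x ∈ I ×ˢ J, g x = true) g)) = Finset.univ :=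
      Finset.filter_true_of_mem (fun g _ => hcon g)
    have T1 : ∑ g ∈ (Finset.univ : Finset (Fin N × Fin d → Bool)).filter (fun g : Fin N × Fin d → Bool => ∃ i ∈ (Finset.univ : Finset (Fin N)),
            ((((Sr i).filter fun x => g x = true)).card : ℝ) < ε * (d:ℝ) / 2),
          (∏ x, if g x then ε else 1 - ε) ≤ (N:ℝ) * Real.exp (-((d:ℝ) * ε) / 8) := by
      refine le_trans (BFAux.sum_filter_bex_le _ _ _ _ hw0) ?_
      have hone : ∀ i ∈ (Finset.univ : Finset (Fin N)),
          (∑ g ∈ (Finset.univ : Finset (Fin N × Fin d → Bool)).filter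
            (fun g => ((((Sr i).filter fun x => g x = true)).card : ℝ) < ε * (d:ℝ) / 2),
            (∏ x, if g x then ε else 1 - ε)) ≤ Real.exp (-((d:ℝ) * ε) / 8) := by
        intro i _
        have h := BFAux.chernoff_low ε hε0.le hεle1 (Sr i)
        rw [hSr_card i] at h
        exact h
      refine le_trans (Finset.sum_le_sum hone) ?_
      rw [Finset.sum_const, Finset.card_univ, Fintype.card_fin, nsmul_eq_mul]
    have T2 : ∑ g ∈ (Finset.univ : Finset (Fin N × Fin d → Bool)).filter (fun g : Fin N × Fin d → Bool => ∃ j ∈ (Finset.univ : Finset (Fin d)),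
            (((((Sc j).filter fun x => g x = true)).card : ℝ) < ε * (N:ℝ) / 2
            ∨ 2 * (ε * (N:ℝ)) < ((((Sc j).filter fun x => g x = true)).card : ℝ))),
          (∏ x, if g x then ε else 1 - ε) ≤ (d:ℝ) * (Real.exp (-((N:ℝ) * ε) / 8) + Real.exp (-((N:ℝ) * ε) / 8)) := by
      refine le_trans (BFAux.sum_filter_bex_le _ _ _ _ hw0) ?_
      have hone : ∀ j ∈ (Finset.univ : Finset (Fin d)),
          (∑ g ∈ (Finset.univ : Finset (Fin N × Fin d → Bool)).filter
            (fun g => (((((Sc j).filter fun x => g x = true)).card : ℝ) < ε * (N:ℝ) / 2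
            ∨ 2 * (ε * (N:ℝ)) < ((((Sc j).filter fun x => g x = true)).card : ℝ))),
            (∏ x, if g x then ε else 1 - ε)) ≤ Real.exp (-((N:ℝ) * ε) / 8) + Real.exp (-((N:ℝ) * ε) / 8) := by
        intro j _
        have hlow := BFAux.chernoff_low ε hε0.le hεle1 (Sc j)
        rw [hSc_card j] at hlow
        have hhigh := BFAux.chernoff_high ε hε0.le hεle1 (Sc j)
        rw [hSc_card j] at hhigh
        rw [Finset.filter_or]
        exact le_trans (BFAux.sum_union_le _ _ _ hw0) (add_le_add hlow hhigh)
      refine le_trans (Finset.sum_le_sum hone) ?_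
      rw [Finset.sum_const, Finset.card_univ, Fintype.card_fin, nsmul_eq_mul]
    have T3 : ∑ g ∈ (Finset.univ : Finset (Fin N × Fin d → Bool)).filter (fun g : Fin N × Fin d → Bool => ∃ I ∈ Finset.powersetCard k (Finset.univ : Finset (Fin N)),
           ∃ J ∈ Finset.powersetCard ℓ (Finset.univ : Finset (Fin d)),
            ∀ x ∈ I ×ˢ J, g x = true),
          (∏ x, if g x then ε else 1 - ε) ≤ ((N.choose k : ℕ):ℝ) * (((d.choose ℓ : ℕ):ℝ) * ε ^ (k * ℓ)) := by
      refine le_trans (BFAux.sum_filter_bex_le _ _ _ _ hw0) ?_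
      have hone : ∀ I ∈ Finset.powersetCard k (Finset.univ : Finset (Fin N)),
          (∑ g ∈ (Finset.univ : Finset (Fin N × Fin d → Bool)).filter
            (fun g => ∃ J ∈ Finset.powersetCard ℓ (Finset.univ : Finset (Fin d)),
              ∀ x ∈ I ×ˢ J, g x = true),
            (∏ x, if g x then ε else 1 - ε)) ≤ ((d.choose ℓ : ℕ):ℝ) * ε ^ (k * ℓ) := by
        intro I hI
        refine le_trans (BFAux.sum_filter_bex_le _ _ _ _ hw0) ?_
        have htwo : ∀ J ∈ Finset.powersetCard ℓ (Finset.univ : Finset (Fin d)),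
            (∑ g ∈ (Finset.univ : Finset (Fin N × Fin d → Bool)).filter
              (fun g => ∀ x ∈ I ×ˢ J, g x = true),
              (∏ x, if g x then ε else 1 - ε)) = ε ^ (k * ℓ) := by
          intro J hJ
          have h := BFAux.prob_allOnes ε (I ×ˢ J)
          rw [Finset.card_product, Finset.mem_powersetCard_univ.mp hI,
            Finset.mem_powersetCard_univ.mp hJ] at h
          exact h
        rw [Finset.sum_congr rfl htwo, Finset.sum_const, Finset.card_powersetCard,
          Finset.card_univ, Fintype.card_fin, nsmul_eq_mul]
      refine le_trans (Finset.sum_le_sum hone) ?_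
      rw [Finset.sum_const, Finset.card_powersetCard, Finset.card_univ,
        Fintype.card_fin, nsmul_eq_mul]
    have hchain : (1:ℝ) ≤ 1/60 + (3/10 + 1/17) := by
      calc (1:ℝ) = ∑ g : Fin N × Fin d → Bool, (∏ x, if g x then ε else 1 - ε) := (BFAux.sum_w_eq_one ε).symm
      _ = ∑ g ∈ (Finset.univ : Finset (Fin N × Fin d → Bool)).filter
          (fun g => (fun g : Fin N × Fin d → Bool => ∃ i ∈ (Finset.univ : Finset (Fin N)),
            ((((Sr i).filter fun x => g x = true)).card : ℝ) < ε * (d:ℝ) / 2) g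
            ∨ ((fun g : Fin N × Fin d → Bool => ∃ j ∈ (Finset.univ : Finset (Fin d)),
            (((((Sc j).filter fun x => g x = true)).card : ℝ) < ε * (N:ℝ) / 2
            ∨ 2 * (ε * (N:ℝ)) < ((((Sc j).filter fun x => g x = true)).card : ℝ))) g ∨ (fun g : Fin N × Fin d → Bool => ∃ I ∈ Finset.powersetCard k (Finset.univ : Finset (Fin N)),
           ∃ J ∈ Finset.powersetCard ℓ (Finset.univ : Finset (Fin d)),
            ∀ x ∈ I ×ˢ J, g x = true) g)), (∏ x, if g x then ε else 1 - ε) := by rw [hbad]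
      _ = ∑ g ∈ ((Finset.univ : Finset (Fin N × Fin d → Bool)).filter (fun g : Fin N × Fin d → Bool => ∃ i ∈ (Finset.univ : Finset (Fin N)),
            ((((Sr i).filter fun x => g x = true)).card : ℝ) < ε * (d:ℝ) / 2)
            ∪ ((Finset.univ : Finset (Fin N × Fin d → Bool)).filter (fun g : Fin N × Fin d → Bool => ∃ j ∈ (Finset.univ : Finset (Fin d)),
            (((((Sc j).filter fun x => g x = true)).card : ℝ) < ε * (N:ℝ) / 2
            ∨ 2 * (ε * (N:ℝ)) < ((((Sc j).filter fun x => g x = true)).card : ℝ)))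
              ∪ (Finset.univ : Finset (Fin N × Fin d → Bool)).filter (fun g : Fin N × Fin d → Bool => ∃ I ∈ Finset.powersetCard k (Finset.univ : Finset (Fin N)),
           ∃ J ∈ Finset.powersetCard ℓ (Finset.univ : Finset (Fin d)),
            ∀ x ∈ I ×ˢ J, g x = true))),
          (∏ x, if g x then ε else 1 - ε) := by rw [Finset.filter_or, Finset.filter_or]
      _ ≤ (∑ g ∈ (Finset.univ : Finset (Fin N × Fin d → Bool)).filter (fun g : Fin N × Fin d → Bool => ∃ i ∈ (Finset.univ : Finset (Fin N)),
            ((((Sr i).filter fun x => g x = true)).card : ℝ) < ε * (d:ℝ) / 2), (∏ x, if g x then ε else 1 - ε))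
          + ((∑ g ∈ (Finset.univ : Finset (Fin N × Fin d → Bool)).filter (fun g : Fin N × Fin d → Bool => ∃ j ∈ (Finset.univ : Finset (Fin d)),
            (((((Sc j).filter fun x => g x = true)).card : ℝ) < ε * (N:ℝ) / 2
            ∨ 2 * (ε * (N:ℝ)) < ((((Sc j).filter fun x => g x = true)).card : ℝ))), (∏ x, if g x then ε else 1 - ε))
            + (∑ g ∈ (Finset.univ : Finset (Fin N × Fin d → Bool)).filter (fun g : Fin N × Fin d → Bool => ∃ I ∈ Finset.powersetCard k (Finset.univ : Finset (Fin N)),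
           ∃ J ∈ Finset.powersetCard ℓ (Finset.univ : Finset (Fin d)),
            ∀ x ∈ I ×ˢ J, g x = true), (∏ x, if g x then ε else 1 - ε))) := by
          refine le_trans (BFAux.sum_union_le _ _ _ hw0) ?_
          exact add_le_add_right (BFAux.sum_union_le _ _ _ hw0) _
      _ ≤ 1/60 + (3/10 + 1/17) := by
          have hb : ((N.choose k : ℕ):ℝ) * (((d.choose ℓ : ℕ):ℝ) * ε ^ (k * ℓ)) ≤ 1/17 := by
            rw [← mul_assoc]; exact blockBound
          exact add_le_add (le_trans T1 rowBound)
            (add_le_add (le_trans T2 colBound) (le_trans T3 hb))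
    norm_num at hchain
  obtain ⟨g, hg⟩ := main
  push_neg at hg
  obtain ⟨hrow, hcol, hblock⟩ := hg
  refine ⟨fun i j => g (i, j), ?_, ?_, ?_⟩
  · intro i
    have h := hrow i (Finset.mem_univ i)
    rw [hSr_filter i g] at h
    simpa using h
  · intro j
    have h := hcol j (Finset.mem_univ j)
    rw [hSc_filter j g] at h
    constructor
    · simpa using h.1
    · have h2 : ((Finset.univ.filter fun i : Fin N => g (i, j) = true).card : ℝ)
          ≤ 2 * ε * N := by
        rw [show 2*ε*(N:ℝ) = 2*(ε*(N:ℝ)) from by ring]; exact h.2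
      simpa using h2
  · intro I hI J hJ
    have h := hblock I (Finset.mem_powersetCard_univ.mpr hI) J
      (Finset.mem_powersetCard_univ.mpr hJ)
    obtain ⟨x, hx, hgx⟩ := h
    rw [Finset.mem_product] at hx
    refine ⟨x.1, hx.1, x.2, hx.2, ?_⟩
    have hfalse : g x = false := by revert hgx; cases (g x) <;> simp
    simpa using hfalse
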